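/- Let G be the simple graph on vertex set {A_1,A_2,A_3, B_1,B_2,B_3, C_1,C_2,C_3} whose edge set consists exactly of the 18 edges {A_i, B_j} and {A_i, C_j} for i, j ∈ {1,2,3}. Assign to each edge {A_i,B_j} the coefficient given by the term ⟨A_iB_j⟩ in I_AB = ⟨A_1B_1⟩ − ⟨A_1B_2⟩ − ⟨A_1B_3⟩ + ⟨A_2B_1⟩ + ⟨A_2B_2⟩ − ⟨A_2B_3⟩ + ⟨A_3B_1⟩ + ⟨A_3B_2⟩ + ⟨A_3B_3⟩, and analogously for edges {A_i,C_j} from I_AC (same coefficients with B replaced by C). Then for every partition of the 18 edges into sets F_1,…,F_r such that for each j the subgraph of G induced on the set of endpoints of the edges in F_j is chordal, the sum over j of the maxima, over assignments a : V(G) → {−1,+1}, of the subexpression Σ_{{u,v}∈F_j} β({u,v}) a(u)a(v) (with β the assigned coefficients) is strictly greater than 10. -/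

import Mathlib

/-- The two-element set of outcomes `{−1, +1}` (as a subtype of `ℤ`). -/
abbrev Sgn : Type := ({-1, 1} : Finset ℤ)

instance : Nonempty Sgn := ⟨⟨1, by decide⟩⟩

/-- A finite simple graph is *chordal* if every cycle of length at least 4 has a
chord, i.e. an edge of the graph joining two vertices of the cycle that are not
consecutive on the cycle. -/
def SimpleGraph.IsChordal {W : Type*} (G : SimpleGraph W) : Prop :=
  ∀ (v : W) (c : G.Walk v v), c.IsCycle → 4 ≤ c.length →
    ∃ u w : W, u ∈ c.support ∧ w ∈ c.support ∧ G.Adj u w ∧ ¬ c.toSubgraph.Adj u w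

/-- The nine observables `A₁,A₂,A₃,B₁,B₂,B₃,C₁,C₂,C₃` (indexed from `0`). -/
inductive Obs : Type
  | A (i : Fin 3)
  | B (j : Fin 3)
  | C (j : Fin 3)
  deriving DecidableEq, Fintype

open Obs in
/-- Base relation for the commutation graph: exactly the 18 edges `A_i ∼ B_j` and
`A_i ∼ C_j`. -/
def baseRel : Obs → Obs → Bool
  | A _, B _ => true
  | A _, C _ => true
  | _, _ => false

/-- The commutation graph of the two three-setting XOR games `I_AB` and `I_AC`. -/
def G18 : SimpleGraph Obs := SimpleGraph.fromRel (fun u v => baseRel u v = true)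

instance : DecidableRel G18.Adj := fun u v =>
  decidable_of_iff _ (SimpleGraph.fromRel_adj (fun u v => baseRel u v = true) u v).symm

/-- The XOR-game coefficients: the matrix of signs of `⟨A_iB_j⟩` in
`I_AB = ⟨A₁B₁⟩ − ⟨A₁B₂⟩ − ⟨A₁B₃⟩ + ⟨A₂B₁⟩ + ⟨A₂B₂⟩ − ⟨A₂B₃⟩ + ⟨A₃B₁⟩ + ⟨A₃B₂⟩ + ⟨A₃B₃⟩`. -/
def coeff (i j : Fin 3) : ℝ :=
  if i = 0 ∧ j ≠ 0 then -1 else if i = 1 ∧ j = 2 then -1 else 1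

open Obs in
/-- Auxiliary one-sided coefficient function on ordered pairs of observables. -/
def coeffAux : Obs → Obs → ℝ
  | A i, B j => coeff i j
  | A i, C j => coeff i j
  | _, _ => 0

/-- The edge coefficients `β`: the coefficient of `⟨A_iB_j⟩` in `I_AB` on the edge
`{A_i, B_j}`, and the coefficient of `⟨A_iC_j⟩` in `I_AC` on the edge `{A_i, C_j}`. -/
def β : Sym2 Obs → ℝ :=
  Sym2.lift ⟨fun u v => coeffAux u v + coeffAux v u, fun u v => add_comm _ _⟩

/-- The value `a(u)a(v)` of an assignment on an unordered pair `{u, v}`. -/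
def edgeTerm (a : Obs → Sgn) : Sym2 Obs → ℤ :=
  Sym2.lift ⟨fun u v => (a u : ℤ) * (a v : ℤ), fun u v => mul_comm _ _⟩

/-- The set of endpoints of a set of edges. -/
def endpoints (F : Finset (Sym2 Obs)) : Finset Obs :=
  Finset.univ.filter (fun v => ∃ e ∈ F, v ∈ e)


open Obs

def isA : Obs → Bool | A _ => true | _ => false

lemma coeff_cases (i j : Fin 3) : coeff i j = 1 ∨ coeff i j = -1 := by
  unfold coeff; split_ifs <;> simp

lemma adj_A_nonA (i : Fin 3) {x : Obs} (hx : isA x = false) : G18.Adj (A i) x := by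
  cases x <;> simp_all [G18, SimpleGraph.fromRel_adj, baseRel, isA]

lemma not_adj_AA (i k : Fin 3) : ¬ G18.Adj (A i) (A k) := by
  simp [G18, SimpleGraph.fromRel_adj, baseRel]

lemma not_adj_nonA {x y : Obs} (hx : isA x = false) (hy : isA y = false) :
    ¬ G18.Adj x y := by
  cases x <;> cases y <;> simp_all [G18, SimpleGraph.fromRel_adj, baseRel, isA]

lemma beta_adj {u w : Obs} (h : G18.Adj u w) : β s(u, w) = 1 ∨ β s(u, w) = -1 := by
  cases u <;> cases w <;>
    simp_all [G18, SimpleGraph.fromRel_adj, baseRel, β, coeffAux] <;>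
    apply coeff_cases

lemma beta_diag (v : Obs) : β s(v, v) = 0 := by
  cases v <;> simp [β, coeffAux]

lemma edge_form {e : Sym2 Obs} (he : e ∈ G18.edgeFinset) :
    ∃ i x, isA x = false ∧ e = s(A i, x) := by
  rw [SimpleGraph.mem_edgeFinset] at he
  induction e using Sym2.ind with
  | _ u v =>
    rw [SimpleGraph.mem_edgeSet] at he
    cases u <;> cases v <;>
      simp only [G18, SimpleGraph.fromRel_adj, baseRel] at he <;>
      first
        | (refine ⟨_, _, ?_, rfl⟩; rfl)
        | (refine ⟨_, _, ?_, Sym2.eq_swap⟩; rfl)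
        | simp at he
lemma mem_endpoints {S : Finset (Sym2 Obs)} {v : Obs} {e : Sym2 Obs}
    (he : e ∈ S) (hv : v ∈ e) : v ∈ endpoints S := by
  simp only [endpoints, Finset.mem_filter, Finset.mem_univ, true_and]
  exact ⟨e, he, hv⟩

lemma fourcycle (S : Finset (Sym2 Obs))
    (hch : (G18.induce ((endpoints S : Finset Obs) : Set Obs)).IsChordal)
    {i k : Fin 3} {x y : Obs} (hik : i ≠ k) (hxy : x ≠ y)
    (hx : isA x = false) (hy : isA y = false)
    (h1 : s(A i, x) ∈ S) (h2 : s(A k, y) ∈ S) : False := by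
  set T : Set Obs := ((endpoints S : Finset Obs) : Set Obs) with hT
  have hai : A i ∈ T := mem_endpoints h1 (by simp)
  have hxT : x ∈ T := mem_endpoints h1 (by simp)
  have hak : A k ∈ T := mem_endpoints h2 (by simp)
  have hyT : y ∈ T := mem_endpoints h2 (by simp)
  set va : T := ⟨A i, hai⟩
  set vb : T := ⟨x, hxT⟩
  set vc : T := ⟨A k, hak⟩
  set vd : T := ⟨y, hyT⟩
  have hab : (G18.induce T).Adj va vb := adj_A_nonA i hx
  have hbc : (G18.induce T).Adj vb vc := (adj_A_nonA k hx).symm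
  have hcd : (G18.induce T).Adj vc vd := adj_A_nonA k hy
  have hda : (G18.induce T).Adj vd va := (adj_A_nonA i hy).symm
  let c : (G18.induce T).Walk va va :=
    .cons hab (.cons hbc (.cons hcd (.cons hda .nil)))
  have hne : va ≠ vb ∧ va ≠ vc ∧ va ≠ vd ∧ vb ≠ vc ∧ vb ≠ vd ∧ vc ≠ vd := by
    refine ⟨?_, ?_, ?_, ?_, ?_, ?_⟩ <;>
      simp only [va, vb, vc, vd, Ne, Subtype.mk.injEq] <;>
      first
        | exact hxy
        | (intro h; subst h; simp [isA] at hx hy)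
        | (intro h; cases h; exact hik rfl)
        | (intro h; first | exact (adj_A_nonA i hx).ne h | exact (adj_A_nonA k hx).ne h
                          | exact (adj_A_nonA i hy).ne h | exact (adj_A_nonA k hy).ne h)
  obtain ⟨h12, h13, h14, h23, h24, h34⟩ := hne
  have h21 := h12.symm; have h31 := h13.symm; have h41 := h14.symm
  have h32 := h23.symm; have h42 := h24.symm; have h43 := h34.symm
  have hcyc : c.IsCycle := by
    rw [SimpleGraph.Walk.isCycle_def]
    refine ⟨?_, by simp [c], ?_⟩
    · rw [SimpleGraph.Walk.isTrail_def]
      simp only [c, SimpleGraph.Walk.edges_cons, SimpleGraph.Walk.edges_nil,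
        List.nodup_cons, List.mem_cons, List.not_mem_nil, or_false, List.mem_singleton,
        List.nodup_nil, and_true, Sym2.eq, Sym2.rel_iff', Prod.mk.injEq, Prod.swap_prod_mk]
      tauto
    · simp only [c, SimpleGraph.Walk.support_cons, SimpleGraph.Walk.support_nil,
        List.tail_cons, List.nodup_cons, List.mem_cons, List.not_mem_nil, or_false,
        List.mem_singleton, List.nodup_nil, and_true]
      tauto
  have hlen : 4 ≤ c.length := by simp [c]
  obtain ⟨u, w, hu, hw, hadj, hnadj⟩ := hch va c hcyc hlen
  have hu' : u = va ∨ u = vb ∨ u = vc ∨ u = vd ∨ u = va := by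
    simpa [c, SimpleGraph.Walk.support_cons] using hu
  have hw' : w = va ∨ w = vb ∨ w = vc ∨ w = vd ∨ w = va := by
    simpa [c, SimpleGraph.Walk.support_cons] using hw
  have hadj' : G18.Adj u.val w.val := hadj
  apply hnadj
  have hedge : ∀ {p q : ↑T}, s(p, q) ∈ c.edges → c.toSubgraph.Adj p q := by
    intro p q hpq
    rw [← SimpleGraph.Subgraph.mem_edgeSet, SimpleGraph.Walk.mem_edges_toSubgraph]
    exact hpq
  have hAA : ¬ G18.Adj (A i) (A k) := not_adj_AA i k
  have hDD : ¬ G18.Adj x y := not_adj_nonA hx hy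
  rcases hu' with rfl|rfl|rfl|rfl|rfl <;> rcases hw' with rfl|rfl|rfl|rfl|rfl <;>
    first
      | exact absurd hadj' (by simpa using G18.irrefl)
      | exact absurd hadj' hAA
      | exact absurd hadj' (fun h => hAA h.symm)
      | exact absurd hadj' hDD
      | exact absurd hadj' (fun h => hDD h.symm)
      | (apply hedge; simp [c, Sym2.eq_swap])

lemma star_of_chordal (S : Finset (Sym2 Obs)) (hsub : S ⊆ G18.edgeFinset)
    (hch : (G18.induce ((endpoints S : Finset Obs) : Set Obs)).IsChordal) :
    ∃ v, ∀ e ∈ S, v ∈ e := by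
  rcases S.eq_empty_or_nonempty with rfl | ⟨e0, he0⟩
  · exact ⟨A 0, by simp⟩
  obtain ⟨i0, x0, hx0, rfl⟩ := edge_form (hsub he0)
  by_cases hall : ∀ e ∈ S, A i0 ∈ e
  · exact ⟨A i0, hall⟩
  push_neg at hall
  obtain ⟨e1, he1, hnot⟩ := hall
  obtain ⟨k, y, hy, rfl⟩ := edge_form (hsub he1)
  have hik : i0 ≠ k := by
    rintro rfl; exact hnot (by simp)
  have hyx : y = x0 := by
    by_contra h
    exact fourcycle S hch hik (fun hh => h hh.symm) hx0 hy he0 he1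
  rw [hyx] at he1
  refine ⟨x0, fun e he => ?_⟩
  obtain ⟨m, z, hz, rfl⟩ := edge_form (hsub he)
  rcases eq_or_ne z x0 with rfl | hzx
  · simp
  exfalso
  rcases eq_or_ne m i0 with rfl | hmi
  · exact fourcycle S hch hik hzx hz hx0 he he1
  · exact fourcycle S hch hmi hzx hz hx0 he he0

noncomputable def asg (v : Obs) : Obs → Sgn :=
  fun u => if β s(v, u) = -1 then ⟨-1, by decide⟩ else ⟨1, by decide⟩

lemma asg_self (v : Obs) : ((asg v v : ℤ) : ℝ) = 1 := by
  simp [asg, beta_diag v]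

lemma term_one {v u : Obs} (h : G18.Adj v u) :
    β s(v, u) * ((edgeTerm (asg v) s(v, u) : ℤ) : ℝ) = 1 := by
  have ht : edgeTerm (asg v) s(v, u) = (asg v v : ℤ) * (asg v u : ℤ) := rfl
  rcases beta_adj h with hb | hb <;>
    · rw [hb, ht]
      push_cast
      rw [show ((asg v v : ℤ) : ℝ) = 1 from asg_self v]
      norm_num [asg, hb]

lemma star_value (S : Finset (Sym2 Obs)) (hsub : S ⊆ G18.edgeFinset) (v : Obs)
    (hv : ∀ e ∈ S, v ∈ e) :
    ∑ e ∈ S, β e * ((edgeTerm (asg v) e : ℤ) : ℝ) = S.card := by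
  rw [Finset.sum_congr rfl (g := fun _ => (1 : ℝ)) (fun e he => ?_)]
  · simp
  have hadj : e ∈ G18.edgeSet := SimpleGraph.mem_edgeFinset.mp (hsub he)
  have hve := hv e he
  induction e using Sym2.ind with
  | _ p q =>
    rw [SimpleGraph.mem_edgeSet] at hadj
    rcases Sym2.mem_iff.mp hve with rfl | rfl
    · exact term_one hadj
    · rw [Sym2.eq_swap]; exact term_one hadj.symm


/-- For *every* partition `F 0, …, F (r−1)` of the 18 edges of the
commutation graph `G18` such that each induced subgraph on the endpoints of `F j`
is chordal, the sum over `j` of the classical maxima of the subexpressions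
`Σ_{{u,v}∈F j} β({u,v}) a(u)a(v)` is strictly greater than `10`: the tight
no-signaling monogamy `I_AB + I_AC ≤ 10` does not arise from any chordal
decomposition. -/
theorem no_chordal_decomposition_for_xor_monogamy
    (r : ℕ) (F : Fin r → Finset (Sym2 Obs))
    (hsub : ∀ j, F j ⊆ G18.edgeFinset)
    (hdisj : ∀ j k, j ≠ k → Disjoint (F j) (F k))
    (hcover : ∀ e ∈ G18.edgeFinset, ∃ j, e ∈ F j)
    (hchordal : ∀ j, (G18.induce ((endpoints (F j) : Finset Obs) : Set Obs)).IsChordal) :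
    10 < ∑ j, Finset.univ.sup' Finset.univ_nonempty
      (fun a : Obs → Sgn => ∑ e ∈ F j, β e * ((edgeTerm a e : ℤ) : ℝ)) := by
  have hle : ∀ j, ((F j).card : ℝ) ≤ Finset.univ.sup' Finset.univ_nonempty
      (fun a : Obs → Sgn => ∑ e ∈ F j, β e * ((edgeTerm a e : ℤ) : ℝ)) := by
    intro j
    obtain ⟨v, hv⟩ := star_of_chordal (F j) (hsub j) (hchordal j)
    calc ((F j).card : ℝ) = ∑ e ∈ F j, β e * ((edgeTerm (asg v) e : ℤ) : ℝ) :=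
          (star_value (F j) (hsub j) v hv).symm
      _ ≤ _ := Finset.le_sup' (fun a : Obs → Sgn => ∑ e ∈ F j, β e * ((edgeTerm a e : ℤ) : ℝ)) (Finset.mem_univ (asg v))
  have hbi : Finset.univ.biUnion F = G18.edgeFinset := by
    ext e
    simp only [Finset.mem_biUnion, Finset.mem_univ, true_and]
    exact ⟨fun ⟨j, hj⟩ => hsub j hj, fun he => hcover e he⟩
  have hcard : ∑ j, (F j).card = 18 := by
    rw [← Finset.card_biUnion (fun j _ k _ h => hdisj j k h), hbi]
    decide
  have hsum : (18 : ℝ) ≤ ∑ j, Finset.univ.sup' Finset.univ_nonempty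
      (fun a : Obs → Sgn => ∑ e ∈ F j, β e * ((edgeTerm a e : ℤ) : ℝ)) := by
    calc (18 : ℝ) = ((∑ j, (F j).card : ℕ) : ℝ) := by rw [hcard]; norm_num
      _ = ∑ j, ((F j).card : ℝ) := by push_cast; rfl
      _ ≤ _ := Finset.sum_le_sum (fun j _ => hle j)
  linarith
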